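/- For every ditree T in which every vertex has in-degree at least 1, the open in-neighborhood graph N_o⁻(T) is a chordal graph (every cycle of length at least 4 has a chord). -/

import Mathlib

open SimpleGraph

variable {V W : Type*}

/-- The closed out-neighborhood of `v` in the digraph with arc relation `A`. -/
def NplusC (A : V → V → Prop) (v : V) : Set V := insert v {u | A v u}

/-- The closed in-neighborhood of `v`. -/
def NminusC (A : V → V → Prop) (v : V) : Set V := insert v {u | A u v}

/-- The open out-neighborhood of `v`. -/
def NplusO (A : V → V → Prop) (v : V) : Set V := {u | A v u}

/-- The open in-neighborhood of `v`. -/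
def NminusO (A : V → V → Prop) (v : V) : Set V := {u | A u v}

/-- `S` is a dominating set: every vertex is in a closed out-neighborhood of a member of `S`. -/
def IsDomSet (A : V → V → Prop) (S : Set V) : Prop := ∀ u, ∃ v ∈ S, u ∈ NplusC A v

/-- The domination number of a digraph. -/
noncomputable def domNum (V : Type*) [Fintype V] (A : V → V → Prop) : ℕ :=
  sInf {n | ∃ S : Set V, IsDomSet A S ∧ S.ncard = n}

/-- `P` is a packing: closed in-neighborhoods of members are pairwise disjoint. -/
def IsPacking (A : V → V → Prop) (P : Set V) : Prop :=
  P.Pairwise fun x y => Disjoint (NminusC A x) (NminusC A y)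

/-- The packing number of a digraph. -/
noncomputable def packNum (V : Type*) [Fintype V] (A : V → V → Prop) : ℕ :=
  sSup {n | ∃ P : Set V, IsPacking A P ∧ P.ncard = n}

/-- `S` is a total dominating set: every vertex has an in-neighbor in `S`. -/
def IsTotalDomSet (A : V → V → Prop) (S : Set V) : Prop := ∀ u, ∃ v ∈ S, A v u

/-- The total domination number of a digraph. -/
noncomputable def totalDomNum (V : Type*) [Fintype V] (A : V → V → Prop) : ℕ :=
  sInf {n | ∃ S : Set V, IsTotalDomSet A S ∧ S.ncard = n}

/-- `P` is an open packing: open in-neighborhoods of members are pairwise disjoint. -/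
def IsOpenPacking (A : V → V → Prop) (P : Set V) : Prop :=
  P.Pairwise fun x y => Disjoint (NminusO A x) (NminusO A y)

/-- The open packing number of a digraph. -/
noncomputable def openPackNum (V : Type*) [Fintype V] (A : V → V → Prop) : ℕ :=
  sSup {n | ∃ P : Set V, IsOpenPacking A P ∧ P.ncard = n}

/-- The underlying (simple) graph of a digraph. -/
def ugr (A : V → V → Prop) : SimpleGraph V := SimpleGraph.fromRel A

/-- A ditree is a digraph whose underlying graph is a tree. -/
def IsDitree (A : V → V → Prop) : Prop := (ugr A).IsTree

/-- Arc relation of the Cartesian product of two digraphs. -/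
def cartArc (A : V → V → Prop) (B : W → W → Prop) : V × W → V × W → Prop :=
  fun p q => (p.1 = q.1 ∧ B p.2 q.2) ∨ (p.2 = q.2 ∧ A p.1 q.1)

/-- Arc relation of the direct product of two digraphs. -/
def dirArc (A : V → V → Prop) (B : W → W → Prop) : V × W → V × W → Prop :=
  fun p q => A p.1 q.1 ∧ B p.2 q.2

/-- The closed in-neighborhood graph of a digraph: distinct vertices are adjacent iff
their closed in-neighborhoods intersect. -/
def Ncg (A : V → V → Prop) : SimpleGraph V :=
  SimpleGraph.fromRel (fun u v => (NminusC A u ∩ NminusC A v).Nonempty)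

/-- The open in-neighborhood graph of a digraph: distinct vertices are adjacent iff
their open in-neighborhoods intersect. -/
def Nog (A : V → V → Prop) : SimpleGraph V :=
  SimpleGraph.fromRel (fun u v => (NminusO A u ∩ NminusO A v).Nonempty)

section AuxLemmas

open SimpleGraph Walk

variable {V : Type*} [DecidableEq V] {G : SimpleGraph V}

private lemma aux_getVert_mem_support {a b : V} (p : G.Walk a b) (i : ℕ) :
    p.getVert i ∈ p.support := by
  induction p generalizing i with
  | nil => cases i <;> simp [Walk.getVert]
  | cons h q ih =>
    cases i with
    | zero => simp [Walk.getVert]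
    | succ n => simp only [Walk.getVert_cons_succ, Walk.support_cons, List.mem_cons]; exact Or.inr (ih n)

private lemma aux_support_getElem? {a b : V} (p : G.Walk a b) (i : ℕ) (hi : i ≤ p.length) :
    p.support[i]? = some (p.getVert i) := by
  induction p generalizing i with
  | nil =>
    simp only [Walk.length_nil, Nat.le_zero] at hi
    subst hi; simp [Walk.getVert]
  | cons h q ih =>
    cases i with
    | zero => simp [Walk.getVert]
    | succ n =>
      simp only [Walk.length_cons, Nat.add_le_add_iff_right] at hi
      simpa [Walk.getVert_cons_succ] using ih n hi

private lemma aux_mem_edges_iff {a b : V} (p : G.Walk a b) (e : Sym2 V) :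
    e ∈ p.edges ↔ ∃ i, i < p.length ∧ e = s(p.getVert i, p.getVert (i + 1)) := by
  induction p with
  | nil => simp
  | @cons a c b h q ih =>
    simp only [Walk.edges_cons, List.mem_cons, ih, Walk.length_cons]
    constructor
    · rintro (rfl | ⟨i, hi, rfl⟩)
      · exact ⟨0, by omega, by simp [Walk.getVert_cons_succ, Walk.getVert]⟩
      · exact ⟨i + 1, by omega, by simp [Walk.getVert_cons_succ]⟩
    · rintro ⟨i, hi, rfl⟩
      cases i with
      | zero => exact Or.inl (by simp [Walk.getVert_cons_succ, Walk.getVert])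
      | succ n => exact Or.inr ⟨n, by omega, by simp [Walk.getVert_cons_succ]⟩

private lemma aux_cycle_getVert_inj {v : V} {c : G.Walk v v} (hc : c.IsCycle)
    {i j : ℕ} (hi1 : 1 ≤ i) (hi2 : i ≤ c.length) (hj1 : 1 ≤ j) (hj2 : j ≤ c.length)
    (h : c.getVert i = c.getVert j) : i = j := by
  have htl : c.support.tail.length = c.length := by
    simp [List.length_tail, Walk.length_support]
  have key : ∀ k, 1 ≤ k → k ≤ c.length → c.support.tail[k - 1]? = some (c.getVert k) := by
    intro k hk1 hk2
    obtain ⟨m, rfl⟩ : ∃ m, k = m + 1 := ⟨k - 1, by omega⟩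
    have h1 := aux_support_getElem? c (m + 1) (by omega)
    rw [c.support_eq_cons, List.getElem?_cons_succ] at h1
    simpa using h1
  have h2 := (List.getElem?_inj (l := c.support.tail) (i := i - 1) (j := j - 1)
    (by omega) hc.support_nodup).mp (by rw [key i hi1 hi2, key j hj1 hj2, h])
  omega

private lemma aux_mem_support_rotate {v u z : V} {c : G.Walk v v}
    (hu : u ∈ c.support) (hz : z ∈ (c.rotate u hu).support) : z ∈ c.support := by
  rw [Walk.support_eq_cons] at hz
  rcases List.mem_cons.mp hz with rfl | hz
  · exact hu
  · exact List.mem_of_mem_tail (((c.support_rotate u hu).mem_iff).mp hz)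

private lemma aux_path_length_eq (hT : G.IsTree) {r u : V} (p : G.Walk r u) (hp : p.IsPath) :
    p.length = G.dist r u := by
  obtain ⟨q, hq, hql⟩ := hT.isConnected.exists_path_of_dist r u
  rw [(hT.existsUnique_path r u).unique hp hq, hql]

private lemma aux_concat_isPath {r a b : V} {p : G.Walk r a} (hp : p.IsPath)
    (hab : G.Adj a b) (hb : b ∉ p.support) : (p.concat hab).IsPath := by
  rw [Walk.isPath_def, Walk.support_concat, List.nodup_append]
  refine ⟨hp.support_nodup, List.nodup_singleton b, ?_⟩
  intro z hz z' hz' hzz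
  rw [List.mem_singleton] at hz'
  subst hz' hzz
  exact hb hz

private lemma aux_adj_dist (hT : G.IsTree) (r : V) {a b : V} (hab : G.Adj a b) :
    G.dist r a + 1 = G.dist r b ∨ G.dist r b + 1 = G.dist r a := by
  obtain ⟨p, hp, hpl⟩ := hT.isConnected.exists_path_of_dist r a
  by_cases hb : b ∈ p.support
  · right
    have h1 : G.dist r b ≤ (p.takeUntil b hb).length := SimpleGraph.dist_le _
    have h2 : (p.takeUntil b hb).length + (p.dropUntil b hb).length = p.length := by
      have := congrArg Walk.length (p.take_spec hb)
      rwa [Walk.length_append] at this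
    have h3 : (p.dropUntil b hb).length ≠ 0 := fun h0 =>
      hab.ne' (Walk.eq_of_length_eq_zero h0)
    have h4 : G.dist r a ≤ G.dist r b + 1 := by
      calc G.dist r a ≤ G.dist r b + G.dist b a := hT.isConnected.dist_triangle
        _ ≤ G.dist r b + 1 := by
            have : G.dist b a ≤ 1 := SimpleGraph.dist_le hab.symm.toWalk
            omega
    omega
  · left
    have hq : (p.concat hab).IsPath := aux_concat_isPath hp hab hb
    have := aux_path_length_eq hT _ hq
    rw [Walk.length_concat] at this
    omega

private lemma aux_parent_unique (hT : G.IsTree) {r b u1 u2 : V}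
    (h1 : G.Adj u1 b) (h2 : G.Adj u2 b)
    (hd1 : G.dist r u1 + 1 = G.dist r b) (hd2 : G.dist r u2 + 1 = G.dist r b) : u1 = u2 := by
  obtain ⟨p1, hp1, hl1⟩ := hT.isConnected.exists_path_of_dist r u1
  obtain ⟨p2, hp2, hl2⟩ := hT.isConnected.exists_path_of_dist r u2
  have hb1 : b ∉ p1.support := by
    intro hb
    have ha : G.dist r b ≤ (p1.takeUntil b hb).length := SimpleGraph.dist_le _
    have hbb := p1.length_takeUntil_le hb
    omega
  have hb2 : b ∉ p2.support := by
    intro hb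
    have ha : G.dist r b ≤ (p2.takeUntil b hb).length := SimpleGraph.dist_le _
    have hbb := p2.length_takeUntil_le hb
    omega
  have hq1 : (p1.concat h1).IsPath := aux_concat_isPath hp1 h1 hb1
  have hq2 : (p2.concat h2).IsPath := aux_concat_isPath hp2 h2 hb2
  have heq : p1.concat h1 = p2.concat h2 := (hT.existsUnique_path r b).unique hq1 hq2
  have e1 : (p1.concat h1).getVert p1.length = u1 := by
    rw [Walk.concat_eq_append, Walk.getVert_append]
    simp
  have e2 : (p2.concat h2).getVert p2.length = u2 := by
    rw [Walk.concat_eq_append, Walk.getVert_append]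
    simp
  have hlen : p1.length = p2.length := by omega
  rw [heq, hlen, e2] at e1
  exact e1.symm

end AuxLemmas

theorem stmt11 {V : Type*} [Fintype V] (A : V → V → Prop)
    (hirr : ∀ v, ¬ A v v) (hT : IsDitree A)
    (hdeg : ∀ v : V, ∃ u, A u v) :
    ∀ (v : V) (c : (Nog A).Walk v v), c.IsCycle → 4 ≤ c.length →
      ∃ x y : V, x ∈ c.support ∧ y ∈ c.support ∧ (Nog A).Adj x y ∧ s(x, y) ∉ c.edges := by
  intro v c hc hlen
  classical
  have htree : (ugr A).IsTree := hT
  have nogAdj : ∀ {a b : V}, (Nog A).Adj a b → a ≠ b ∧ ∃ w, A w a ∧ A w b := by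
    intro a b hab
    rw [Nog, SimpleGraph.fromRel_adj] at hab
    obtain ⟨hne, h | h⟩ := hab
    · obtain ⟨w, hw1, hw2⟩ := h; exact ⟨hne, w, hw1, hw2⟩
    · obtain ⟨w, hw1, hw2⟩ := h; exact ⟨hne, w, hw2, hw1⟩
  have ugrAdj : ∀ {w a : V}, A w a → (ugr A).Adj w a := by
    intro w a h
    have hne : w ≠ a := fun he => hirr a (he ▸ h)
    exact (SimpleGraph.fromRel_adj A w a).mpr ⟨hne, Or.inl h⟩
  -- pick a support vertex of maximal distance from v
  have hsne : c.support.toFinset.Nonempty := ⟨v, List.mem_toFinset.mpr c.start_mem_support⟩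
  obtain ⟨u, huf, hmax⟩ := c.support.toFinset.exists_max_image (fun x => (ugr A).dist v x) hsne
  have hu : u ∈ c.support := List.mem_toFinset.mp huf
  have hc' : (c.rotate u hu).IsCycle := hc.rotate hu
  have hperm : (c.rotate u hu).edges.Perm c.edges := (c.rotate_edges u hu).perm
  have hlen' : (c.rotate u hu).length = c.length := by
    have h := hperm.length_eq
    rwa [Walk.length_edges, Walk.length_edges] at h
  set c' := c.rotate u hu with hc'def
  set n := c'.length with hndef
  have hn4 : 4 ≤ n := by omega
  set x := c'.getVert 1 with hxdef
  set y := c'.getVert (n - 1) with hydef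
  have hxs : x ∈ c.support := aux_mem_support_rotate hu (aux_getVert_mem_support c' 1)
  have hys : y ∈ c.support := aux_mem_support_rotate hu (aux_getVert_mem_support c' (n - 1))
  have a1 : (Nog A).Adj u x := by
    have h := c'.adj_getVert_succ (i := 0) (by omega)
    rwa [Walk.getVert_zero] at h
  have a2 : (Nog A).Adj y u := by
    have h := c'.adj_getVert_succ (i := n - 1) (by omega)
    have h2 : n - 1 + 1 = n := by omega
    rw [h2] at h
    have h3 : c'.getVert n = u := c'.getVert_length
    rwa [h3] at h
  obtain ⟨hux, w1, hw1u, hw1x⟩ := nogAdj a1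
  obtain ⟨hyu, w2, hw2y, hw2u⟩ := nogAdj a2
  have hdx : (ugr A).dist v x ≤ (ugr A).dist v u := hmax x (List.mem_toFinset.mpr hxs)
  have hdy : (ugr A).dist v y ≤ (ugr A).dist v u := hmax y (List.mem_toFinset.mpr hys)
  have claim : ∀ w z : V, (ugr A).Adj w u → (ugr A).Adj w z → z ≠ u →
      (ugr A).dist v z ≤ (ugr A).dist v u → (ugr A).dist v w + 1 = (ugr A).dist v u := by
    intro w z hwu hwz hzu hdz
    rcases aux_adj_dist htree v hwu with h | h
    · exact h
    · exfalso
      rcases aux_adj_dist htree v hwz with h2 | h2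
      · omega
      · exact hzu (aux_parent_unique htree hwz.symm hwu.symm h2 h)
  have hw1d : (ugr A).dist v w1 + 1 = (ugr A).dist v u :=
    claim w1 x (ugrAdj hw1u) (ugrAdj hw1x) (Ne.symm hux) hdx
  have hw2d : (ugr A).dist v w2 + 1 = (ugr A).dist v u :=
    claim w2 y (ugrAdj hw2u) (ugrAdj hw2y) hyu hdy
  have hw12 : w1 = w2 :=
    aux_parent_unique htree (ugrAdj hw1u) (ugrAdj hw2u) hw1d hw2d
  have hxy : x ≠ y := by
    intro he
    have := aux_cycle_getVert_inj hc' (i := 1) (j := n - 1)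
      (by omega) (by omega) (by omega) (by omega) he
    omega
  have hadj : (Nog A).Adj x y := by
    rw [Nog, SimpleGraph.fromRel_adj]
    refine ⟨hxy, Or.inl ⟨w1, hw1x, ?_⟩⟩
    rw [hw12]; exact hw2y
  have hne : s(x, y) ∉ c.edges := by
    rw [← hperm.mem_iff]
    intro hmem
    rw [aux_mem_edges_iff] at hmem
    obtain ⟨i, hi, he⟩ := hmem
    rw [Sym2.eq_iff] at he
    rcases he with ⟨hx', hy'⟩ | ⟨hx', hy'⟩
    · rcases Nat.eq_zero_or_pos i with rfl | hipos
      · rw [Walk.getVert_zero] at hx'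
        exact hux hx'.symm
      · have h1 : 1 = i := aux_cycle_getVert_inj hc' (by omega) (by omega) (by omega)
          (by omega) (hxdef ▸ hx')
        subst h1
        have h2 : n - 1 = 1 + 1 := aux_cycle_getVert_inj hc' (by omega) (by omega)
          (by omega) (by omega) (hydef ▸ hy')
        omega
    · have h1 : 1 = i + 1 := aux_cycle_getVert_inj hc' (by omega) (by omega) (by omega)
        (by omega) (hxdef ▸ hx')
      have h0 : i = 0 := by omega
      subst h0
      rw [Walk.getVert_zero] at hy'
      exact hyu hy'
  exact ⟨x, y, hxs, hys, hadj, hne⟩
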